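/- Assume Hypothesis (H) and additionally that Q = (Q*)^2. Let δ' in k[x] be the determinant of the Hermite matrix H((Q*)^2) associated with (Q*)^2 (note ((Q*)^2)^- = Q*). Then δ' is nonzero with deg_x(δ') ≤ μ' = 2·d_x*·d_y*, and there exist polynomials B, b in k[x,y] with deg_y(B) < d_y* and deg_y(b) < d_y* such that P/(Q*)^2 = D_y(B/(δ'·Q*)) + b/(δ'·Q*), and moreover deg_x(B) ≤ μ' − d_x* + deg_x(P) and deg_x(b) ≤ μ' − d_x* + deg_x(P). -/

import Mathlib

open Polynomial

noncomputable section

/-- A map is a derivation: it is additive and satisfies the Leibniz rule. -/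
def IsDeriv {F : Type*} [CommRing F] (D : F → F) : Prop :=
  (∀ a b, D (a + b) = D a + D b) ∧ ∀ a b, D (a * b) = a * D b + b * D a

/-- Degree in `x` of an element of `k[x][y]` (inner variable `x`, outer variable `y`). -/
def degX {k : Type*} [Field k] (Q : Polynomial (Polynomial k)) : ℕ :=
  Q.support.sup fun i => (Q.coeff i).natDegree

/-- Partial derivative with respect to `x` on `k[x][y]`. -/
def derivX {k : Type*} [Field k] (Q : Polynomial (Polynomial k)) : Polynomial (Polynomial k) :=
  Q.sum fun i a => Polynomial.C (Polynomial.derivative a) * Polynomial.X ^ i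

/-- The embedding `k[x][y] → k(x)(y)`. -/
def toF {k : Type*} [Field k] : Polynomial (Polynomial k) →+* RatFunc (RatFunc k) :=
  (algebraMap (Polynomial (RatFunc k)) (RatFunc (RatFunc k))).comp
    (Polynomial.mapRingHom (algebraMap (Polynomial k) (RatFunc k)))

/-- The embedding `k(x) → k(x)(y)`. -/
def ratToF {k : Type*} [Field k] : RatFunc k →+* RatFunc (RatFunc k) :=
  (algebraMap (Polynomial (RatFunc k)) (RatFunc (RatFunc k))).comp
    (Polynomial.C : RatFunc k →+* Polynomial (RatFunc k))

/-- The embedding `k(x)[y] → k(x)(y)`. -/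
def kyToF {k : Type*} [Field k] : Polynomial (RatFunc k) →+* RatFunc (RatFunc k) :=
  algebraMap (Polynomial (RatFunc k)) (RatFunc (RatFunc k))

/-- The embedding `k[x][y] → k(x)[y]`. -/
def toKy {k : Type*} [Field k] : Polynomial (Polynomial k) →+* Polynomial (RatFunc k) :=
  Polynomial.mapRingHom (algebraMap (Polynomial k) (RatFunc k))

/-- The embedding `k[y] → k[x][y]` (a polynomial in `y` viewed in `k[x][y]`). -/
def yToXY {k : Type*} [Field k] : Polynomial k →+* Polynomial (Polynomial k) :=
  Polynomial.mapRingHom (Polynomial.C : k →+* Polynomial k)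

/-- The Hermite matrix associated with a factorisation `Q = Qs * Qneg`, with respect to the
monomial bases: its columns are the coefficient vectors (in `y`, coefficients in `k[x]`) of
`Qs * D_y(y^j) - E * y^j` for `j < dm` (where `E = Qs * D_y(Qneg) / Qneg`) and of
`Qneg * y^j` for `j < dy - dm`. -/
def hermiteMat {k : Type*} [Field k] (Qs Qneg E : Polynomial (Polynomial k)) (dy dm : ℕ) :
    Matrix (Fin dy) (Fin dy) (Polynomial k) :=
  Matrix.of fun i j =>
    if (j : ℕ) < dm then
      (Qs * Polynomial.derivative (Polynomial.X ^ (j : ℕ)) - E * Polynomial.X ^ (j : ℕ)).coeff i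
    else
      (Qneg * Polynomial.X ^ ((j : ℕ) - dm)).coeff i

section Aux

variable {k : Type*} [Field k]

lemma degX_coeff_le (R : Polynomial (Polynomial k)) (i : ℕ) :
    ((R.coeff i).natDegree) ≤ degX R := by
  by_cases h : i ∈ R.support
  · exact Finset.le_sup (f := fun i => (R.coeff i).natDegree) h
  · simp [Polynomial.notMem_support_iff.mp h]

lemma degX_le_of_coeff {R : Polynomial (Polynomial k)} {c : ℕ}
    (h : ∀ i, (R.coeff i).natDegree ≤ c) : degX R ≤ c :=
  Finset.sup_le fun i _ => h i

lemma degX_coeff_derivative_le (R : Polynomial (Polynomial k)) (t : ℕ) :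
    (((Polynomial.derivative R).coeff t).natDegree) ≤ degX R := by
  rw [Polynomial.coeff_derivative]
  refine Polynomial.natDegree_mul_le.trans ?_
  have h1 : ((t : Polynomial k) + 1).natDegree = 0 := by
    have : ((t : Polynomial k) + 1) = ((t + 1 : ℕ) : Polynomial k) := by push_cast; ring
    rw [this, Polynomial.natDegree_natCast]
  rw [h1, add_zero]
  exact degX_coeff_le R _

lemma det_natDegree_le {N : ℕ} (M : Matrix (Fin N) (Fin N) (Polynomial k))
    (c : Fin N → ℕ) (h : ∀ i j, (M i j).natDegree ≤ c j) :
    M.det.natDegree ≤ ∑ j, c j := by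
  classical
  rw [Matrix.det_apply]
  refine Polynomial.natDegree_sum_le_of_forall_le _ _ fun σ _ => ?_
  have h2 : (∏ i, M (σ i) i).natDegree ≤ ∑ j, c j :=
    (Polynomial.natDegree_prod_le _ _).trans (Finset.sum_le_sum fun j _ => h (σ j) j)
  rcases Int.units_eq_one_or (Equiv.Perm.sign σ) with hs | hs
  · simpa [hs] using h2
  · simpa [hs] using h2

lemma squarefree_prod_of_rel {R : Type*} [CommMonoidWithZero R] [IsCancelMulZero R] [DecompositionMonoid R]
    (f : ℕ → R) (m : ℕ) (h1 : ∀ i < m, Squarefree (f i))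
    (h2 : ∀ i < m, ∀ j < m, i ≠ j → IsRelPrime (f i) (f j)) :
    Squarefree (∏ i ∈ Finset.range m, f i) := by
  induction m with
  | zero => simpa using squarefree_one
  | succ t ih =>
    rw [Finset.prod_range_succ, squarefree_mul_iff]
    refine ⟨IsRelPrime.prod_left fun i hi => ?_, ih (fun i hi => h1 i (by omega))
      (fun i hi j hj hij => h2 i (by omega) j (by omega) hij), h1 t (by omega)⟩
    have hi' := Finset.mem_range.mp hi
    exact h2 i (by omega) t (by omega) (by omega)

lemma isRelPrime_derivative_of_squarefree [CharZero k]
    (Qs : Polynomial (Polynomial k)) (hsf : Squarefree Qs) (hprim : Qs.IsPrimitive) :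
    IsRelPrime Qs (Polynomial.derivative Qs) := by
  intro d hd1 hd2
  by_contra hdu
  have hQs0 : Qs ≠ 0 := hsf.ne_zero
  have hd0 : d ≠ 0 := by rintro rfl; exact hQs0 (zero_dvd_iff.mp hd1)
  obtain ⟨p, hpirr, hpd⟩ := WfDvdMonoid.exists_irreducible_factor hdu hd0
  have hp1 : p ∣ Qs := hpd.trans hd1
  have hp2 : p ∣ derivative Qs := hpd.trans hd2
  obtain ⟨e, he⟩ := hp1
  have hpe : ¬ p ∣ e := by
    intro hc
    exact hpirr.not_isUnit (hsf p (by rw [he]; exact mul_dvd_mul_left p hc))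
  have hprime : Prime p := UniqueFactorizationMonoid.irreducible_iff_prime.mp hpirr
  have hdvd : p ∣ derivative p * e := by
    have hD : derivative Qs = derivative p * e + p * derivative e := by
      rw [he, derivative_mul]
    rw [hD] at hp2
    exact (dvd_add_right (Dvd.intro _ rfl)).mp (by rwa [add_comm] at hp2)
  rcases hprime.2.2 _ _ hdvd with hpp | hpe'
  · by_cases hdeg : p.natDegree = 0
    · have hpc : p = C (p.coeff 0) := Polynomial.eq_C_of_natDegree_eq_zero hdeg
      have : IsUnit (p.coeff 0) := hprim _ (by rw [← hpc]; exact ⟨e, he⟩)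
      exact hpirr.not_isUnit (by rw [hpc]; exact this.map Polynomial.C)
    · have hdp0 : derivative p ≠ 0 := fun h =>
        hdeg (Polynomial.natDegree_eq_zero_of_derivative_eq_zero h)
      have h1 := Polynomial.natDegree_le_of_dvd hpp hdp0
      exact absurd h1 (not_le.mpr (Polynomial.natDegree_derivative_lt hdeg))
  · exact hpe hpe'

def vecPolyLow {N : ℕ} (n : ℕ) (v : Fin N → Polynomial k) : Polynomial (Polynomial k) :=
  ∑ j : Fin N, if (j : ℕ) < n then Polynomial.C (v j) * Polynomial.X ^ (j : ℕ) else 0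

def vecPolyHigh {N : ℕ} (n : ℕ) (v : Fin N → Polynomial k) : Polynomial (Polynomial k) :=
  ∑ j : Fin N, if (j : ℕ) < n then 0 else Polynomial.C (v j) * Polynomial.X ^ ((j : ℕ) - n)

def colPoly (Qs : Polynomial (Polynomial k)) (n j : ℕ) : Polynomial (Polynomial k) :=
  if j < n then
    Qs * Polynomial.derivative (Polynomial.X ^ j) - Polynomial.derivative Qs * Polynomial.X ^ j
  else Qs * Polynomial.X ^ (j - n)

lemma hermiteMat_apply (Qs : Polynomial (Polynomial k)) (N n : ℕ) (i j : Fin N) :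
    hermiteMat Qs Qs (Polynomial.derivative Qs) N n i j = (colPoly Qs n (j : ℕ)).coeff i := by
  unfold hermiteMat colPoly
  rw [Matrix.of_apply]
  split_ifs <;> rfl

lemma hermite_entry_natDegree_le (Qs : Polynomial (Polynomial k)) (N n : ℕ) (i j : Fin N) :
    ((hermiteMat Qs Qs (Polynomial.derivative Qs) N n) i j).natDegree ≤ degX Qs := by
  rw [hermiteMat_apply]
  unfold colPoly
  split_ifs with h
  · rw [Polynomial.coeff_sub]
    refine (Polynomial.natDegree_sub_le _ _).trans (max_le ?_ ?_)
    · rw [Polynomial.derivative_X_pow, mul_left_comm, Polynomial.coeff_C_mul]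
      refine Polynomial.natDegree_mul_le.trans ?_
      rw [Polynomial.natDegree_natCast, zero_add, Polynomial.coeff_mul_X_pow']
      split_ifs
      · exact degX_coeff_le Qs _
      · simp
    · rw [Polynomial.coeff_mul_X_pow']
      split_ifs
      · exact degX_coeff_derivative_le Qs _
      · simp
  · rw [Polynomial.coeff_mul_X_pow']
    split_ifs
    · exact degX_coeff_le Qs _
    · simp

lemma hermite_comb {N : ℕ} (Qs : Polynomial (Polynomial k)) (n : ℕ) (v : Fin N → Polynomial k) :
    Qs * Polynomial.derivative (vecPolyLow n v) - Polynomial.derivative Qs * vecPolyLow n v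
      + Qs * vecPolyHigh n v
      = ∑ j : Fin N, Polynomial.C (v j) * colPoly Qs n (j : ℕ) := by
  unfold vecPolyLow vecPolyHigh colPoly
  rw [derivative_sum, Finset.mul_sum, Finset.mul_sum, Finset.mul_sum,
    ← Finset.sum_sub_distrib, ← Finset.sum_add_distrib]
  refine Finset.sum_congr rfl fun j _ => ?_
  by_cases h : (j : ℕ) < n
  · simp only [if_pos h, derivative_C_mul]
    ring
  · simp only [if_neg h, derivative_zero, mul_zero, zero_mul]
    ring

lemma mulVec_hermite {N : ℕ} (Qs : Polynomial (Polynomial k)) (n : ℕ)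
    (v : Fin N → Polynomial k) (i : Fin N) :
    (hermiteMat Qs Qs (Polynomial.derivative Qs) N n).mulVec v i
      = (Qs * Polynomial.derivative (vecPolyLow n v)
          - Polynomial.derivative Qs * vecPolyLow n v + Qs * vecPolyHigh n v).coeff i := by
  rw [hermite_comb, Polynomial.finset_sum_coeff]
  simp only [Polynomial.coeff_C_mul]
  simp only [Matrix.mulVec, dotProduct, hermiteMat_apply]
  exact Finset.sum_congr rfl fun j _ => mul_comm _ _

lemma natDegree_vecPolyLow_le {N : ℕ} (n : ℕ) (v : Fin N → Polynomial k) (hn : 1 ≤ n) :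
    (vecPolyLow n v).natDegree ≤ n - 1 := by
  refine Polynomial.natDegree_sum_le_of_forall_le _ _ fun j _ => ?_
  split_ifs with h
  · exact (Polynomial.natDegree_C_mul_le _ _).trans (by simp [Polynomial.natDegree_X_pow]; omega)
  · simp

lemma natDegree_vecPolyHigh_le {N : ℕ} (n : ℕ) (v : Fin N → Polynomial k) (hn : 1 ≤ n)
    (hN : N ≤ 2 * n) :
    (vecPolyHigh n v).natDegree ≤ n - 1 := by
  refine Polynomial.natDegree_sum_le_of_forall_le _ _ fun j _ => ?_
  split_ifs with h
  · simp
  · refine (Polynomial.natDegree_C_mul_le _ _).trans ?_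
    rw [Polynomial.natDegree_X_pow]
    have := j.isLt
    omega

lemma degX_vecPolyLow_le {N : ℕ} (n c : ℕ) (v : Fin N → Polynomial k)
    (h : ∀ j, (v j).natDegree ≤ c) : degX (vecPolyLow n v) ≤ c := by
  refine degX_le_of_coeff fun i => ?_
  rw [vecPolyLow]; rw [Polynomial.finset_sum_coeff]
  refine Polynomial.natDegree_sum_le_of_forall_le _ _ fun j _ => ?_
  split_ifs with hj
  · rw [Polynomial.coeff_C_mul, Polynomial.coeff_X_pow]
    split_ifs
    · simpa using h j
    · simp
  · simp

lemma degX_vecPolyHigh_le {N : ℕ} (n c : ℕ) (v : Fin N → Polynomial k)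
    (h : ∀ j, (v j).natDegree ≤ c) : degX (vecPolyHigh n v) ≤ c := by
  refine degX_le_of_coeff fun i => ?_
  rw [vecPolyHigh]; rw [Polynomial.finset_sum_coeff]
  refine Polynomial.natDegree_sum_le_of_forall_le _ _ fun j _ => ?_
  split_ifs with hj
  · simp
  · rw [Polynomial.coeff_C_mul, Polynomial.coeff_X_pow]
    split_ifs
    · simpa using h j
    · simp

lemma vecPolyLow_coeff {N : ℕ} (n : ℕ) (v : Fin N → Polynomial k) (j : Fin N)
    (hj : (j : ℕ) < n) : (vecPolyLow n v).coeff (j : ℕ) = v j := by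
  rw [vecPolyLow]; rw [Polynomial.finset_sum_coeff]
  rw [Finset.sum_eq_single j]
  · rw [if_pos hj, Polynomial.coeff_C_mul, Polynomial.coeff_X_pow, if_pos rfl, mul_one]
  · intro j' _ hne
    split_ifs with h
    · rw [Polynomial.coeff_C_mul, Polynomial.coeff_X_pow,
        if_neg (fun hh => hne (Fin.ext hh.symm)), mul_zero]
    · rfl
  · intro h; exact absurd (Finset.mem_univ j) h

lemma vecPolyHigh_coeff {N : ℕ} (n : ℕ) (v : Fin N → Polynomial k) (j : Fin N)
    (hj : n ≤ (j : ℕ)) : (vecPolyHigh n v).coeff ((j : ℕ) - n) = v j := by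
  rw [vecPolyHigh]; rw [Polynomial.finset_sum_coeff]
  rw [Finset.sum_eq_single j]
  · rw [if_neg (not_lt.mpr hj), Polynomial.coeff_C_mul, Polynomial.coeff_X_pow, if_pos rfl,
      mul_one]
  · intro j' _ hne
    split_ifs with h
    · rfl
    · rw [Polynomial.coeff_C_mul, Polynomial.coeff_X_pow, if_neg, mul_zero]
      intro hh
      exact hne (Fin.ext (by omega))
  · intro h; exact absurd (Finset.mem_univ j) h

lemma comb_natDegree_le (Qs L H : Polynomial (Polynomial k)) {n : ℕ} (hQdeg : Qs.natDegree = n)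
    (hL : L.natDegree ≤ n - 1) (hH : H.natDegree ≤ n - 1) (hn : 1 ≤ n) :
    (Qs * Polynomial.derivative L - Polynomial.derivative Qs * L
      + Qs * H).natDegree ≤ 2 * n - 1 := by
  have hdL : (Polynomial.derivative L).natDegree ≤ n - 1 :=
    (Polynomial.natDegree_derivative_le L).trans (by omega)
  have hdQ : (Polynomial.derivative Qs).natDegree ≤ n - 1 :=
    (Polynomial.natDegree_derivative_le Qs).trans (by omega)
  refine (Polynomial.natDegree_add_le _ _).trans (max_le ?_ ?_)
  · refine (Polynomial.natDegree_sub_le _ _).trans (max_le ?_ ?_)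
    · exact (Polynomial.natDegree_mul_le).trans (by omega)
    · exact (Polynomial.natDegree_mul_le).trans (by omega)
  · exact (Polynomial.natDegree_mul_le).trans (by omega)

lemma toF_injective : Function.Injective (toF (k := k)) := by
  have h1 : Function.Injective (toKy (k := k)) :=
    Polynomial.map_injective _ (IsFractionRing.injective (Polynomial k) (RatFunc k))
  have h2 : Function.Injective (kyToF (k := k)) :=
    IsFractionRing.injective (Polynomial (RatFunc k)) (RatFunc (RatFunc k))
  exact fun a b h => h1 (h2 h)

end Aux

/-- Corollary `cor:specialQ`. Assume Hypothesis (H) and `Q = (Q*)²`. With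
`δ' = det H((Q*)²)` and `μ' = 2·d_x*·d_y*`: `δ'` is nonzero of degree at most `μ'`, and there
exist `B, b ∈ k[x,y]` with `deg_y(B), deg_y(b) < d_y*`,
`P/(Q*)² = D_y(B/(δ'·Q*)) + b/(δ'·Q*)`, and `deg_x(B), deg_x(b) ≤ μ' − d_x* + deg_x(P)`. -/
theorem stmt_4 {k : Type*} [Field k] [CharZero k]
    (P Q : Polynomial (Polynomial k))
    (hP : P ≠ 0) (hQ : Q ≠ 0)
    (hPQdeg : P.degree < Q.degree)
    (hPQcop : IsRelPrime P Q)
    (hQprimY : Q.IsPrimitive)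
    (m : ℕ) (hm : 0 < m) (q : Polynomial k) (Qi : ℕ → Polynomial (Polynomial k))
    (hfac : Q = Polynomial.C q * ∏ i ∈ Finset.range m, Qi i ^ (i + 1))
    (hQiprim : ∀ i < m, (Qi i).IsPrimitive)
    (hQisqf : ∀ i < m, Squarefree (Qi i))
    (hQicop : ∀ i < m, ∀ j < m, i ≠ j → IsRelPrime (Qi i) (Qi j))
    (hQim : 0 < (Qi (m - 1)).natDegree)
    (Qs Qneg : Polynomial (Polynomial k))
    (hQs : Qs = ∏ i ∈ Finset.range m, Qi i)
    (hQneg : Q = Qs * Qneg)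
    (hQQ : Q = Qs ^ 2)
    (δ' : Polynomial k)
    (hδ' : δ' = (hermiteMat Qs Qs (Polynomial.derivative Qs)
      ((Qs ^ 2).natDegree) Qs.natDegree).det)
    (μ' : ℕ) (hμ' : μ' = 2 * degX Qs * Qs.natDegree)
    (Dy : RatFunc (RatFunc k) → RatFunc (RatFunc k)) (hDy : IsDeriv Dy)
    (hDyval : ∀ A : Polynomial (RatFunc k), Dy (kyToF A) = kyToF (Polynomial.derivative A)) :
    δ' ≠ 0 ∧ δ'.natDegree ≤ μ' ∧
    ∃ B b : Polynomial (Polynomial k),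
      B.degree < (Qs.natDegree : WithBot ℕ) ∧
      b.degree < (Qs.natDegree : WithBot ℕ) ∧
      toF P / toF Qs ^ 2 =
        Dy (toF B / (toF (Polynomial.C δ') * toF Qs)) +
          toF b / (toF (Polynomial.C δ') * toF Qs) ∧
      (degX B : ℤ) ≤ (μ' : ℤ) - degX Qs + degX P ∧
      (degX b : ℤ) ≤ (μ' : ℤ) - degX Qs + degX P := by
  classical
  have hQs0 : Qs ≠ 0 := by
    intro h
    apply hQ
    rw [hQQ, h]
    ring
  set n := Qs.natDegree with hn
  set N := (Qs ^ 2).natDegree with hN0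
  have hN : N = 2 * n := by rw [hN0, Polynomial.natDegree_pow, hn]
  have hPdeglt : P.natDegree < N := Polynomial.natDegree_lt_natDegree hP (hQQ ▸ hPQdeg)
  have hn1 : 1 ≤ n := by omega
  have hQsprim : Qs.IsPrimitive := fun r hr =>
    hQprimY r (hr.trans (hQneg ▸ dvd_mul_right Qs Qneg))
  have hQssf : Squarefree Qs := by
    rw [hQs]
    exact squarefree_prod_of_rel Qi m hQisqf hQicop
  have hcop : IsRelPrime Qs (Polynomial.derivative Qs) :=
    isRelPrime_derivative_of_squarefree Qs hQssf hQsprim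
  set M := hermiteMat Qs Qs (Polynomial.derivative Qs) N n with hM
  -- δ' ≠ 0
  have hδ0 : δ' ≠ 0 := by
    rw [hδ']
    intro hzero
    obtain ⟨v, hv0, hv⟩ := (Matrix.exists_mulVec_eq_zero_iff).mpr hzero
    have hcomb : Qs * Polynomial.derivative (vecPolyLow n v)
        - Polynomial.derivative Qs * vecPolyLow n v + Qs * vecPolyHigh n v = 0 := by
      apply Polynomial.ext
      intro i
      rw [Polynomial.coeff_zero]
      by_cases hi : i < N
      · have h1 := congrFun hv ⟨i, hi⟩
        rw [mulVec_hermite] at h1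
        simpa using h1
      · refine Polynomial.coeff_eq_zero_of_natDegree_lt
          (lt_of_le_of_lt (b := 2 * n - 1) ?_ (by omega))
        exact comb_natDegree_le Qs _ _ hn.symm (natDegree_vecPolyLow_le n v hn1)
          (natDegree_vecPolyHigh_le n v hn1 (by omega)) hn1
    have hdvd : Qs ∣ Polynomial.derivative Qs * vecPolyLow n v :=
      ⟨Polynomial.derivative (vecPolyLow n v) + vecPolyHigh n v, by linear_combination -hcomb⟩
    have hQsL : Qs ∣ vecPolyLow n v := hcop.dvd_of_dvd_mul_left hdvd
    have hL0 : vecPolyLow n v = 0 := by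
      by_contra hL0
      have := Polynomial.natDegree_le_of_dvd hQsL hL0
      have h2 := natDegree_vecPolyLow_le n v hn1
      omega
    have hH0 : vecPolyHigh n v = 0 := by
      rw [hL0] at hcomb
      simp only [derivative_zero, mul_zero, sub_zero, zero_add] at hcomb
      rcases mul_eq_zero.mp hcomb with h | h
      · exact absurd h hQs0
      · exact h
    apply hv0
    funext j
    by_cases hj : (j : ℕ) < n
    · have := vecPolyLow_coeff n v j hj
      rw [hL0, Polynomial.coeff_zero] at this
      simpa using this.symm
    · have := vecPolyHigh_coeff n v j (not_lt.mp hj)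
      rw [hH0, Polynomial.coeff_zero] at this
      simpa using this.symm
  refine ⟨hδ0, ?_, ?_⟩
  -- degree bound on δ'
  · rw [hδ', hμ']
    refine le_trans (det_natDegree_le M (fun _ => degX Qs)
      (fun i j => hermite_entry_natDegree_le Qs N n i j)) ?_
    rw [Finset.sum_const, Finset.card_univ, Fintype.card_fin, smul_eq_mul]
    exact le_of_eq (by rw [hN]; ring)
  -- existence of B and b
  · set pv : Fin N → Polynomial k := fun i => P.coeff i with hpv
    set w : Fin N → Polynomial k := M.cramer pv with hw
    have hmv : M.mulVec w = M.det • pv := Matrix.mulVec_cramer M pv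
    set B := vecPolyLow n w with hB
    set b := vecPolyHigh n w with hb
    have hE1 : Qs * Polynomial.derivative B - Polynomial.derivative Qs * B + Qs * b
        = Polynomial.C δ' * P := by
      apply Polynomial.ext
      intro i
      by_cases hi : i < N
      · have h1 := congrFun hmv ⟨i, hi⟩
        rw [mulVec_hermite] at h1
        simp only [Pi.smul_apply, smul_eq_mul] at h1
        rw [Polynomial.coeff_C_mul, hδ']
        simpa using h1
      · rw [Polynomial.coeff_C_mul,
          Polynomial.coeff_eq_zero_of_natDegree_lt (show P.natDegree < i by omega), mul_zero]
        refine Polynomial.coeff_eq_zero_of_natDegree_lt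
          (lt_of_le_of_lt (b := 2 * n - 1) ?_ (by omega))
        exact comb_natDegree_le Qs _ _ hn.symm (natDegree_vecPolyLow_le n w hn1)
          (natDegree_vecPolyHigh_le n w hn1 (by omega)) hn1
    -- degree bounds in x on w
    have hwdeg : ∀ j, (w j).natDegree ≤ (N - 1) * degX Qs + degX P := by
      intro j
      rw [hw, Matrix.cramer_apply]
      refine le_trans (det_natDegree_le _ (fun j' => if j' = j then degX P else degX Qs) ?_) ?_
      · intro i j'
        rcases eq_or_ne j' j with h | h
        · subst h
          simp only [Matrix.updateCol_apply, if_pos rfl]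
          exact degX_coeff_le P i
        · simp only [Matrix.updateCol_apply, if_neg h]
          exact hermite_entry_natDegree_le Qs N n i j'
      · rw [← Finset.sum_erase_add _ _ (Finset.mem_univ j), if_pos rfl]
        have herase : ∑ j' ∈ Finset.univ.erase j,
            (if j' = j then degX P else degX Qs) = (N - 1) * degX Qs := by
          rw [Finset.sum_congr rfl (fun x hx => if_neg (Finset.ne_of_mem_erase hx)),
            Finset.sum_const, Finset.card_erase_of_mem (Finset.mem_univ j),
            Finset.card_univ, Fintype.card_fin, smul_eq_mul]
        rw [herase]
    have hbound : ∀ t : ℕ, t ≤ (N - 1) * degX Qs + degX P →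
        (t : ℤ) ≤ (μ' : ℤ) - degX Qs + degX P := by
      intro t ht
      have hNQ : (N - 1) * degX Qs + degX Qs = μ' := by
        rw [hμ']
        have h1 : N - 1 + 1 = N := by omega
        calc (N - 1) * degX Qs + degX Qs = (N - 1 + 1) * degX Qs := by ring
          _ = N * degX Qs := by rw [h1]
          _ = 2 * degX Qs * n := by rw [hN]; ring
      have h2 : (t : ℤ) ≤ (((N - 1) * degX Qs : ℕ) : ℤ) + ((degX P : ℕ) : ℤ) := by
        exact_mod_cast ht
      have h4 : (((N - 1) * degX Qs : ℕ) : ℤ) + ((degX Qs : ℕ) : ℤ) = ((μ' : ℕ) : ℤ) := by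
        exact_mod_cast hNQ
      linarith
    refine ⟨B, b, ?_, ?_, ?_, ?_, ?_⟩
    · rcases eq_or_ne B 0 with h | h
      · rw [h, Polynomial.degree_zero]
        exact WithBot.bot_lt_coe n
      · rw [Polynomial.degree_eq_natDegree h]
        exact_mod_cast (show B.natDegree < n by
          have h5 := natDegree_vecPolyLow_le n w hn1
          rw [← hB] at h5; omega)
    · rcases eq_or_ne b 0 with h | h
      · rw [h, Polynomial.degree_zero]
        exact WithBot.bot_lt_coe n
      · rw [Polynomial.degree_eq_natDegree h]
        exact_mod_cast (show b.natDegree < n by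
          have h5 := natDegree_vecPolyHigh_le n w hn1 (by omega)
          rw [← hb] at h5; omega)
    · -- the rational-function identity
      have htoF0 : ∀ R : Polynomial (Polynomial k), R ≠ 0 → toF R ≠ 0 := by
        intro R hR h
        exact hR (toF_injective (by simpa using h))
      have hDtoF : ∀ R : Polynomial (Polynomial k), Dy (toF R) = toF (Polynomial.derivative R) := by
        intro R
        show Dy (kyToF (Polynomial.map _ R)) = kyToF (Polynomial.map _ (Polynomial.derivative R))
        rw [hDyval, Polynomial.derivative_map]
      have hδC0 : toF (Polynomial.C δ') ≠ 0 := htoF0 _ (by simp [hδ0])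
      have hQsF0 : toF Qs ≠ 0 := htoF0 _ hQs0
      have hden : toF (Polynomial.C δ') * toF Qs ≠ 0 := mul_ne_zero hδC0 hQsF0
      have hE2 : toF Qs * toF (Polynomial.derivative B) - toF (Polynomial.derivative Qs) * toF B
          + toF Qs * toF b = toF (Polynomial.C δ') * toF P := by
        have := congrArg toF hE1
        simpa only [map_mul, map_sub, map_add] using this
      have hquot : ∀ u v : RatFunc (RatFunc k), v ≠ 0 →
          Dy (u / v) = (Dy u * v - u * Dy v) / (v * v) := by
        intro u v hv
        have h2 := hDy.2 (u / v) v
        rw [div_mul_cancel₀ u hv] at h2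
        rw [h2]
        field_simp
        ring
      rw [hquot (toF B) (toF (Polynomial.C δ') * toF Qs) hden]
      have hd1 : Dy (toF (Polynomial.C δ') * toF Qs)
          = toF (Polynomial.C δ') * toF (Polynomial.derivative Qs) := by
        rw [hDy.2, hDtoF Qs, hDtoF (Polynomial.C δ')]
        simp [Polynomial.derivative_C]
      rw [hd1, hDtoF B]
      field_simp
      linear_combination -hE2
    · -- degX bound on B
      exact hbound _ (degX_vecPolyLow_le n _ w hwdeg)
    · exact hbound _ (degX_vecPolyHigh_le n _ w hwdeg)
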